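/- Let n ≥ 1 and set k = (n−1)/2 if n is odd and k = n/2 if n is even. For all x = (x_1,…,x_n) ∈ ℝ^n, the antisymmetric multivariate cosine function satisfies cos⁻_{ρ₂}(x) = (−1)^k · 2^{n(n−1)} · ∏_{i=1}^n cos(π x_i/2) · ∏_{1 ≤ i < j ≤ n} sin(π(x_i + x_j)/2) · sin(π(x_i − x_j)/2), where ρ₂ = (n−1/2, n−3/2, …, 3/2, 1/2). -/
import Mathlib

open Real Finset
open Polynomial


noncomputable def myP : ℕ → Polynomial ℝ
  | 0 => 1
  | 1 => Polynomial.C 2 * Polynomial.X - 1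
  | (m+2) => Polynomial.C 2 * Polynomial.X * myP (m+1) - myP m

lemma myP_deg_coeff : ∀ m : ℕ, (myP m).natDegree = m ∧ (myP m).coeff m = 2 ^ m := by
  intro m
  induction m using Nat.strong_induction_on with
  | _ m ih =>
    match m with
    | 0 => simp [myP]
    | 1 =>
      constructor
      · rw [myP]
        compute_degree!
      · simp [myP, coeff_one]
    | (m+2) =>
      obtain ⟨h1d, h1c⟩ := ih (m+1) (by omega)
      obtain ⟨h0d, h0c⟩ := ih m (by omega)
      have hne : myP (m+1) ≠ 0 := fun h => by
        rw [h, coeff_zero] at h1c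
        exact (pow_ne_zero _ (two_ne_zero)) h1c.symm
      have hXd : (Polynomial.C (2:ℝ) * Polynomial.X * myP (m+1)).natDegree = m + 2 := by
        rw [natDegree_mul (by simp [mul_ne_zero]) hne, h1d]
        norm_num [natDegree_C_mul_X]
        omega
      have hdeg : (myP (m+2)).natDegree = m + 2 := by
        rw [myP, natDegree_sub_eq_left_of_natDegree_lt (by rw [hXd, h0d]; omega), hXd]
      refine ⟨hdeg, ?_⟩
      have hz : (myP m).coeff (m+2) = 0 := coeff_eq_zero_of_natDegree_lt (by omega)
      rw [myP, coeff_sub, hz, mul_assoc, coeff_C_mul, coeff_X_mul, h1c]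
      ring

lemma myP_eval : ∀ (m : ℕ) (u : ℝ),
    Real.cos (u / 2) * (myP m).eval (Real.cos u) = Real.cos (((m : ℝ) + 1/2) * u) := by
  intro m
  induction m using Nat.strong_induction_on with
  | _ m ih =>
    match m with
    | 0 => intro u; norm_num [myP]; ring_nf
    | 1 =>
      intro u
      have h1 := Real.cos_add u (u/2)
      have h2 := Real.cos_sub u (u/2)
      have h3 : u - u/2 = u/2 := by ring
      have h4 : (↑(1:ℕ) + 1/2 : ℝ) * u = u + u/2 := by push_cast; ring
      rw [h4]
      simp only [myP, eval_sub, eval_mul, eval_C, eval_X, eval_one]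
      rw [h3] at h2
      nlinarith [h1, h2]
    | (m+2) =>
      intro u
      have i1 := ih (m+1) (by omega) u
      have i0 := ih m (by omega) u
      have h1 := Real.cos_add u ((↑(m+1) + 1/2 : ℝ) * u)
      have h2 := Real.cos_sub u ((↑(m+1) + 1/2 : ℝ) * u)
      have e1 : u + (↑(m+1) + 1/2 : ℝ) * u = ((↑(m+2) : ℝ) + 1/2) * u := by push_cast; ring
      have e2 : u - (↑(m+1) + 1/2 : ℝ) * u = -(((m:ℝ) + 1/2) * u) := by push_cast; ring
      rw [e1] at h1
      rw [e2, Real.cos_neg] at h2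
      simp only [myP, eval_sub, eval_mul, eval_C, eval_X]
      linear_combination (2 * Real.cos u) * i1 - i0 - h1 - h2


lemma prod_Ioi_rev {n : ℕ} (f : Fin n → Fin n → ℝ) :
    (∏ i : Fin n, ∏ j ∈ Finset.Ioi i, f i.rev j.rev)
      = ∏ i : Fin n, ∏ j ∈ Finset.Ioi i, f j i := by
  calc (∏ i : Fin n, ∏ j ∈ Finset.Ioi i, f i.rev j.rev)
      = ∏ i : Fin n, ∏ j ∈ Finset.Ioi (Fin.revPerm i), f (Fin.revPerm i).rev j.rev :=
        (Equiv.prod_comp Fin.revPerm (fun i => ∏ j ∈ Finset.Ioi i, f i.rev j.rev)).symm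
    _ = ∏ i : Fin n, ∏ j ∈ Finset.Iio i, f i j := by
        refine Finset.prod_congr rfl fun i _ => ?_
        simp only [Fin.revPerm_apply, Fin.rev_rev]
        refine Finset.prod_nbij' Fin.rev Fin.rev
          (fun j hj => Finset.mem_Iio.mpr ?_) (fun j hj => Finset.mem_Ioi.mpr ?_)
          (fun j _ => Fin.rev_rev j) (fun j _ => Fin.rev_rev j) (fun j _ => rfl)
        · rw [← Fin.rev_rev i]
          exact Fin.rev_lt_rev.mpr (Finset.mem_Ioi.mp hj)
        · exact Fin.rev_lt_rev.mpr (Finset.mem_Iio.mp hj)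
    _ = ∏ i : Fin n, ∏ j ∈ Finset.Ioi i, f j i := by
        refine Finset.prod_comm' fun a b => ?_
        simp [Finset.mem_Iio, Finset.mem_Ioi]

/-- The antisymmetric multivariate cosine function
`cos⁻_λ(x) = Σ_{σ ∈ S_n} sgn(σ) ∏_{i=1}^n cos(π λ_{σ(i)} x_i)`. -/
noncomputable def cosMinus (n : ℕ) (lam x : Fin n → ℝ) : ℝ :=
  ∑ σ : Equiv.Perm (Fin n),
    ((Equiv.Perm.sign σ : ℤ) : ℝ) * ∏ i : Fin n, Real.cos (Real.pi * lam (σ i) * x i)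

lemma entry_eq (n : ℕ) (hn : 1 ≤ n) (y : ℝ) (i : Fin n) :
    Real.cos (Real.pi * ((n : ℝ) - ((i : ℕ) : ℝ) - 1 / 2) * y)
      = Real.cos (Real.pi * y / 2) * (myP (n - 1 - (i : ℕ))).eval (Real.cos (Real.pi * y)) := by
  have h2 : Real.pi * y / 2 = (Real.pi * y) / 2 := by ring
  rw [h2, myP_eval (n - 1 - (i : ℕ)) (Real.pi * y)]
  congr 1
  have hi : (i : ℕ) ≤ n - 1 := by omega
  rw [Nat.cast_sub hi, Nat.cast_sub hn, Nat.cast_one]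
  ring

lemma neg_one_pow_half (n k : ℕ) (hn : 1 ≤ n)
    (hk : (Odd n → 2 * k + 1 = n) ∧ (Even n → 2 * k = n)) :
    (-1 : ℝ) ^ (n * (n - 1) / 2) = (-1 : ℝ) ^ k := by
  rcases Nat.even_or_odd n with he | ho
  · have h := hk.2 he
    have h2 : n * (n - 1) = 2 * (k * (n - 1)) := by rw [← h]; ring
    have : n * (n - 1) / 2 = k * (n - 1) := by omega
    rw [this, pow_mul']
    have hodd : Odd (n - 1) := by
      rcases he with ⟨m, hm⟩; exact ⟨m - 1, by omega⟩
    rw [hodd.neg_one_pow]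
  · have h := hk.1 ho
    have hh : n - 1 = 2 * k := by omega
    have h2 : n * (n - 1) = 2 * (n * k) := by rw [hh]; ring
    have : n * (n - 1) / 2 = n * k := by omega
    rw [this, pow_mul, ho.neg_one_pow]

theorem antisymmetric_cos_rho2 (n : ℕ) (hn : 1 ≤ n) (k : ℕ)
    (hk : (Odd n → 2 * k + 1 = n) ∧ (Even n → 2 * k = n)) (x : Fin n → ℝ) :
    cosMinus n (fun i => (n : ℝ) - ((i : ℕ) : ℝ) - 1 / 2) x
      = (-1 : ℝ) ^ k * (2 : ℝ) ^ (n * (n - 1)) *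
        (∏ i : Fin n, Real.cos (Real.pi * x i / 2)) *
        ∏ i : Fin n, ∏ j ∈ Finset.Ioi i,
          Real.sin (Real.pi * (x i + x j) / 2) * Real.sin (Real.pi * (x i - x j) / 2) := by
  set q := n * (n - 1) / 2 with hq
  have hq2 : 2 * q = n * (n - 1) := by
    have : Even (n * (n - 1)) := by
      rcases Nat.even_or_odd n with h | h
      · exact h.mul_right _
      · exact (Nat.Odd.sub_odd h odd_one).mul_left _
    rcases this with ⟨m, hm⟩
    omega
  set v : Fin n → ℝ := fun i => Real.cos (Real.pi * x i) with hv
  set c : Fin n → ℝ := fun i => Real.cos (Real.pi * x i / 2) with hc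
  -- step 1 : cosMinus as determinant
  have step1 : cosMinus n (fun i => (n : ℝ) - ((i : ℕ) : ℝ) - 1 / 2) x
      = (Matrix.of fun i j : Fin n =>
          Real.cos (Real.pi * ((n : ℝ) - ((i : ℕ) : ℝ) - 1 / 2) * x j)).det := by
    rw [Matrix.det_apply']
    rfl
  -- step 2-3 : transpose, rewrite entries, factor rows
  have step2 : (Matrix.of fun i j : Fin n =>
          Real.cos (Real.pi * ((n : ℝ) - ((i : ℕ) : ℝ) - 1 / 2) * x j)).det
      = (∏ i, c i) *
        (Matrix.of fun i j : Fin n => (myP (n - 1 - (j : ℕ))).eval (v i)).det := by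
    rw [← Matrix.det_transpose]
    rw [show (Matrix.of fun i j : Fin n =>
          Real.cos (Real.pi * ((n : ℝ) - ((i : ℕ) : ℝ) - 1 / 2) * x j)).transpose
        = Matrix.of fun i j : Fin n =>
            c i * (myP (n - 1 - (j : ℕ))).eval (v i) from by
      ext i j
      simp only [Matrix.transpose_apply, Matrix.of_apply]
      exact entry_eq n hn (x i) j]
    exact Matrix.det_mul_column c _
  -- step 4 : reverse columns/rows
  have step4 : (Matrix.of fun i j : Fin n => (myP (n - 1 - (j : ℕ))).eval (v i)).det
      = (Matrix.of fun i j : Fin n => (myP (j : ℕ)).eval (v (Fin.rev i))).det := by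
    rw [← Matrix.det_submatrix_equiv_self Fin.revPerm]
    congr 1
    ext i j
    simp only [Matrix.submatrix_apply, Matrix.of_apply, Fin.revPerm_apply]
    congr 2
    have := j.2
    rw [Fin.val_rev]
    omega
  -- step 5 : vandermonde factorization
  have step5 : (Matrix.of fun i j : Fin n => (myP (j : ℕ)).eval (v (Fin.rev i))).det
      = (Matrix.vandermonde fun i => v (Fin.rev i)).det *
        (Matrix.of fun i j : Fin n => (myP (j : ℕ)).coeff (i : ℕ)).det := by
    rw [Matrix.eval_matrixOfPolynomials_eq_vandermonde_mul_matrixOfPolynomials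
        (fun i => v (Fin.rev i)) (fun j => myP (j : ℕ))
        (fun i => le_of_eq (myP_deg_coeff (i : ℕ)).1), Matrix.det_mul]
  -- step 6 : coefficient matrix determinant
  have step6 : (Matrix.of fun i j : Fin n => (myP (j : ℕ)).coeff (i : ℕ)).det = 2 ^ q := by
    rw [Matrix.det_of_upperTriangular (Matrix.matrixOfPolynomials_blockTriangular
        (fun j : Fin n => myP (j : ℕ)) (fun i => le_of_eq (myP_deg_coeff (i : ℕ)).1))]
    have : ∀ i : Fin n, (myP (i : ℕ)).coeff (i : ℕ) = 2 ^ (i : ℕ) :=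
      fun i => (myP_deg_coeff (i : ℕ)).2
    calc (∏ i : Fin n, (Matrix.of fun i j : Fin n => (myP (j : ℕ)).coeff (i : ℕ)) i i)
        = ∏ i : Fin n, (2 : ℝ) ^ (i : ℕ) := by
          exact Finset.prod_congr rfl fun i _ => this i
      _ = 2 ^ (∑ i : Fin n, (i : ℕ)) := Finset.prod_pow_eq_pow_sum _ _ _
      _ = 2 ^ q := by
          rw [show (∑ i : Fin n, (i : ℕ)) = ∑ i ∈ Finset.range n, i from
            Fin.sum_univ_eq_sum_range (fun i => i) n, Finset.sum_range_id]
  -- step 7 : vandermonde value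
  have step7 : (Matrix.vandermonde fun i => v (Fin.rev i)).det
      = (-2 : ℝ) ^ q * ∏ i : Fin n, ∏ j ∈ Finset.Ioi i,
          Real.sin (Real.pi * (x i + x j) / 2) * Real.sin (Real.pi * (x i - x j) / 2) := by
    rw [Matrix.det_vandermonde]
    have hre : (∏ i : Fin n, ∏ j ∈ Finset.Ioi i, (v (Fin.rev j) - v (Fin.rev i)))
        = ∏ i : Fin n, ∏ j ∈ Finset.Ioi i, (v i - v j) :=
      prod_Ioi_rev (fun a b => v b - v a)
    rw [hre]
    have hentry : ∀ i j : Fin n, v i - v j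
        = -2 * (Real.sin (Real.pi * (x i + x j) / 2) * Real.sin (Real.pi * (x i - x j) / 2)) := by
      intro i j
      rw [hv]
      rw [Real.cos_sub_cos]
      have e1 : (Real.pi * x i + Real.pi * x j) / 2 = Real.pi * (x i + x j) / 2 := by ring
      have e2 : (Real.pi * x i - Real.pi * x j) / 2 = Real.pi * (x i - x j) / 2 := by ring
      rw [e1, e2]
      ring
    calc (∏ i : Fin n, ∏ j ∈ Finset.Ioi i, (v i - v j))
        = ∏ i : Fin n, ∏ j ∈ Finset.Ioi i,
            (-2 : ℝ) * (Real.sin (Real.pi * (x i + x j) / 2) *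
              Real.sin (Real.pi * (x i - x j) / 2)) := by
          exact Finset.prod_congr rfl fun i _ => Finset.prod_congr rfl fun j _ => hentry i j
      _ = (∏ i : Fin n, ∏ j ∈ Finset.Ioi i, (-2 : ℝ)) *
            ∏ i : Fin n, ∏ j ∈ Finset.Ioi i,
              Real.sin (Real.pi * (x i + x j) / 2) * Real.sin (Real.pi * (x i - x j) / 2) := by
          rw [← Finset.prod_mul_distrib]
          exact Finset.prod_congr rfl fun i _ => Finset.prod_mul_distrib
      _ = (-2 : ℝ) ^ q * _ := by
          congr 1
          simp only [Finset.prod_const]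
          rw [Finset.prod_pow_eq_pow_sum]
          congr 1
          have : ∀ i : Fin n, (Finset.Ioi i).card = n - 1 - (i : ℕ) := fun i => Fin.card_Ioi i
          rw [Finset.sum_congr rfl fun i _ => this i, Fin.sum_univ_eq_sum_range,
            Finset.sum_range_reflect (fun j => j) n, Finset.sum_range_id]
  -- combine
  rw [step1, step2, step4, step5, step6, step7]
  have hsign : (-2 : ℝ) ^ q = (-1 : ℝ) ^ k * 2 ^ q := by
    rw [neg_pow, ← neg_one_pow_half n k hn hk, hq]
  rw [hsign]
  have h2pow : (2 : ℝ) ^ (n * (n - 1)) = 2 ^ q * 2 ^ q := by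
    rw [← pow_add, ← hq2]; ring_nf
  rw [h2pow]
  ring
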